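/- Let h be a positive semidefinite symmetric bilinear form on a finite-dimensional real inner product space, w a vector, a a real number. If for all V, a + 2⟨w,V⟩ + h(V,V) ≥ 0, then w lies in the range of h (viewed as a linear map) and a ≥ ⟨h⁺w, w⟩ where h⁺ is the Moore–Penrose pseudoinverse. -/

import Mathlib

open scoped RealInnerProductSpace

/-- Positive semidefinite version: if `h` is a self-adjoint positive semidefinite
operator on a finite-dimensional real inner product space and
`a + 2⟨w,V⟩ + h(V,V) ≥ 0` for all `V`, then `w` lies in the range of `h` and
`a ≥ ⟨h⁺w, w⟩`, i.e. `a ≥ ⟨z, w⟩` for any `z` with `h z = w`. -/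
theorem harnack_psd {T : Type*} [NormedAddCommGroup T]
    [InnerProductSpace ℝ T] [FiniteDimensional ℝ T]
    (h : T →ₗ[ℝ] T) (hsymm : ∀ x y : T, ⟪h x, y⟫ = ⟪x, h y⟫)
    (hpsd : ∀ V : T, 0 ≤ ⟪h V, V⟫)
    (w : T) (a : ℝ)
    (hineq : ∀ V : T, 0 ≤ a + 2 * ⟪w, V⟫ + ⟪h V, V⟫) :
    w ∈ LinearMap.range h ∧ ∀ z : T, h z = w → ⟪z, w⟫ ≤ a := by
  -- first: w ⊥ ker h
  have hwker : ∀ v : T, h v = 0 → ⟪w, v⟫ = 0 := by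
    intro v hv
    by_contra hc
    set c := ⟪w, v⟫ with hcdef
    have key := hineq (((-a - 1) / (2 * c)) • v)
    rw [real_inner_smul_right, map_smul, hv, smul_zero] at key
    simp only [inner_zero_left] at key
    have h2c : 2 * c ≠ 0 := by positivity
    rw [← hcdef] at key
    have : 2 * ((-a - 1) / (2 * c) * c) = -a - 1 := by
      field_simp
    nlinarith [key]
  -- range h = (ker h)ᗮ
  have hrange : (LinearMap.range h)ᗮ = LinearMap.ker h := by
    ext v
    simp only [Submodule.mem_orthogonal, LinearMap.mem_range, LinearMap.mem_ker]
    constructor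
    · intro hv
      have : ⟪h v, h v⟫ = 0 := by
        rw [hsymm, real_inner_comm]
        exact (hv (h (h v)) ⟨h v, rfl⟩)
      exact inner_self_eq_zero.mp this
    · intro hv u hu
      obtain ⟨x, rfl⟩ := hu
      rw [hsymm, hv, inner_zero_right]
  have hw : w ∈ LinearMap.range h := by
    rw [← Submodule.orthogonal_orthogonal (LinearMap.range h), hrange]
    intro v hv
    rw [real_inner_comm]
    exact hwker v hv
  refine ⟨hw, fun z hz => ?_⟩
  have key := hineq (-z)
  rw [map_neg, inner_neg_right, inner_neg_left, inner_neg_right, neg_neg, hz] at key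
  have : ⟪w, z⟫ = ⟪z, w⟫ := real_inner_comm z w
  linarith
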